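/- Let d be a nonnegative integer, (f_n) a sequence of positive reals with f_n/n^d → 1, and α a real constant. Then for every compact K ⊂ ℂ, sup_{η∈K} | ∑_{n=0}^{N-1} (f_n/N^{d+1})(1+η/N)^{n+α} − ∫_0^1 t^d e^{ηt} dt | → 0 as N → ∞, where (1+η/N)^{n+α} is defined via the principal branch. -/

import Mathlib

open Complex Filter Finset intervalIntegral

private lemma my_norm_exp (z : ℂ) : ‖Complex.exp z‖ = Real.exp z.re := by
  rw [Complex.norm_exp]

private lemma my_norm_exp_le {z : ℂ} {R : ℝ} (h : ‖z‖ ≤ R) : ‖Complex.exp z‖ ≤ Real.exp R := by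
  rw [my_norm_exp]
  exact Real.exp_le_exp.2 ((Complex.re_le_norm z).trans h)

private lemma my_exp_diff_le {z w : ℂ} {R : ℝ} (h : ‖z - w‖ ≤ 1) (hw : ‖w‖ ≤ R) :
    ‖Complex.exp z - Complex.exp w‖ ≤ 2 * Real.exp R * ‖z - w‖ := by
  have h1 : Complex.exp z - Complex.exp w = Complex.exp w * (Complex.exp (z - w) - 1) := by
    rw [mul_sub, mul_one, ← Complex.exp_add, add_sub_cancel]
  have h3 : ‖Complex.exp (z - w) - 1‖ ≤ 2 * ‖z - w‖ := Complex.norm_exp_sub_one_le h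
  have h2 : ‖Complex.exp w‖ ≤ Real.exp R := my_norm_exp_le hw
  have h0 : (0:ℝ) ≤ ‖Complex.exp w‖ := norm_nonneg _
  calc ‖Complex.exp z - Complex.exp w‖ = ‖Complex.exp w‖ * ‖Complex.exp (z - w) - 1‖ := by
        rw [h1, norm_mul]
    _ ≤ Real.exp R * (2 * ‖z - w‖) := by
        apply mul_le_mul h2 h3 (norm_nonneg _) (Real.exp_nonneg _)
    _ = 2 * Real.exp R * ‖z - w‖ := by ring

private lemma my_pow_sub_pow_le {s t : ℝ} (hs : 0 ≤ s) (hst : s ≤ t) (ht : t ≤ 1) :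
    ∀ d : ℕ, t ^ d - s ^ d ≤ d * (t - s) := by
  intro d
  induction d with
  | zero => simp
  | succ k ih =>
    have h1 : s ^ k ≤ t ^ k := pow_le_pow_left₀ hs hst k
    have h2 : t ^ k ≤ 1 := pow_le_one₀ (hs.trans hst) ht
    have h3 : (0:ℝ) ≤ s ^ k := pow_nonneg hs k
    have h4 : (0:ℝ) ≤ k := Nat.cast_nonneg k
    have ht0 : 0 ≤ t := hs.trans hst
    have hsk1 : s ^ k ≤ 1 := h1.trans h2
    have e : t ^ (k+1) - s ^ (k+1) = t * (t ^ k - s ^ k) + (t - s) * s ^ k := by ring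
    have b1 : t * (t ^ k - s ^ k) ≤ 1 * (t ^ k - s ^ k) :=
      mul_le_mul_of_nonneg_right ht (sub_nonneg.2 h1)
    have b3 : (t - s) * s ^ k ≤ (t - s) * 1 := mul_le_mul_of_nonneg_left hsk1 (sub_nonneg.2 hst)
    push_cast
    linarith [ih]

private lemma my_log_bound {w : ℂ} (h : ‖w‖ ≤ 1/2) :
    ‖Complex.log (1 + w) - w‖ ≤ ‖w‖ ^ 2 := by
  have h1 : ‖w‖ < 1 := lt_of_le_of_lt h (by norm_num)
  have := Complex.norm_log_one_add_sub_self_le h1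
  have h2 : (1 - ‖w‖)⁻¹ ≤ 2 := by
    rw [inv_le_comm₀ (by linarith) (by norm_num)]
    linarith
  have h3 : (0:ℝ) ≤ ‖w‖^2 := sq_nonneg _
  calc ‖Complex.log (1 + w) - w‖ ≤ ‖w‖ ^ 2 * (1 - ‖w‖)⁻¹ / 2 := this
    _ ≤ ‖w‖ ^ 2 * 2 / 2 := by nlinarith
    _ = ‖w‖ ^ 2 := by ring

private lemma my_chunk (d : ℕ) {R : ℝ} (hR : 1 ≤ R) {η : ℂ} (hη : ‖η‖ ≤ R)
    {N : ℕ} (hN : 2 * R ≤ (N : ℝ)) {n : ℕ} (hn : n < N) :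
    ‖(∫ t in ((n : ℝ)/N)..(((n : ℝ)+1)/N), (t : ℂ) ^ d * Complex.exp (η * t)) -
      ((n : ℂ) ^ d / (N : ℂ) ^ (d + 1)) * Complex.exp (η * (((n : ℝ)/N : ℝ) : ℂ))‖
      ≤ (2 * R + d) * Real.exp R / (N : ℝ) ^ 2 := by
  have hN0 : (0:ℝ) < N := by linarith
  have hNC : (N:ℂ) ≠ 0 := by exact_mod_cast hN0.ne'
  set s : ℝ := (n:ℝ)/N with hs
  set b : ℝ := ((n:ℝ)+1)/N with hb
  have hs0 : 0 ≤ s := div_nonneg (Nat.cast_nonneg n) hN0.le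
  have hbs1 : b - s = 1 / N := by rw [hb, hs]; field_simp; ring
  have hsb : s ≤ b := by rw [hs, hb]; gcongr; linarith
  have hb1 : b ≤ 1 := by
    rw [hb, div_le_one hN0]
    have : (n:ℝ) + 1 ≤ (N:ℝ) := by exact_mod_cast hn
    linarith
  have hs1 : s ≤ 1 := hsb.trans hb1
  have hRN : R / N ≤ 1/2 := by rw [div_le_iff₀ hN0]; linarith
  have hcont : Continuous fun t : ℝ => (t:ℂ)^d * Complex.exp (η * t) := by
    exact (Complex.continuous_ofReal.pow d).mul
      (continuous_const.mul Complex.continuous_ofReal).cexp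
  have hconst : ((n : ℂ) ^ d / (N : ℂ) ^ (d + 1)) * Complex.exp (η * (s:ℂ))
      = ∫ _ in s..b, ((s:ℂ)^d * Complex.exp (η * (s:ℂ))) := by
    rw [intervalIntegral.integral_const, hbs1, Complex.real_smul, hs]
    push_cast
    field_simp
    rw [div_pow, pow_succ, mul_right_comm, mul_div_assoc', mul_comm ((N:ℂ)^d), mul_div_assoc,
      div_self (pow_ne_zero _ hNC), mul_one]
  have key : ∀ t ∈ Set.uIoc s b,
      ‖(t:ℂ)^d * Complex.exp (η*t) - (s:ℂ)^d * Complex.exp (η*(s:ℂ))‖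
        ≤ (2*R+(d:ℝ))*Real.exp R / N := by
    intro t htm
    rw [Set.uIoc_of_le hsb] at htm
    obtain ⟨hst, htb⟩ := htm
    have hst' := hst.le
    have ht0 : 0 ≤ t := hs0.trans hst'
    have ht1 : t ≤ 1 := htb.trans hb1
    have htsN : t - s ≤ 1/N := by linarith
    have hnt : ‖(t:ℂ)^d‖ ≤ 1 := by
      rw [norm_pow, Complex.norm_real, Real.norm_eq_abs, _root_.abs_of_nonneg ht0]
      exact pow_le_one₀ ht0 ht1
    have hnts : ‖η*(t:ℂ) - η*(s:ℂ)‖ ≤ R * (1/N) := by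
      have e : η*(t:ℂ) - η*(s:ℂ) = η * (((t - s : ℝ)) : ℂ) := by push_cast; ring
      rw [e, norm_mul, Complex.norm_real, Real.norm_eq_abs, _root_.abs_of_nonneg (by linarith)]
      exact mul_le_mul hη htsN (by linarith) (by linarith)
    have hnts1 : ‖η*(t:ℂ) - η*(s:ℂ)‖ ≤ 1 := by
      calc ‖η*(t:ℂ) - η*(s:ℂ)‖ ≤ R * (1/N) := hnts
        _ = R / N := by ring
        _ ≤ 1 := by linarith
    have hes : ‖η * (s:ℂ)‖ ≤ R := by
      rw [norm_mul, Complex.norm_real, Real.norm_eq_abs, _root_.abs_of_nonneg hs0]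
      calc ‖η‖ * s ≤ R * 1 := mul_le_mul hη hs1 hs0 (by linarith)
        _ = R := by ring
    have hexp : ‖Complex.exp (η*(t:ℂ)) - Complex.exp (η*(s:ℂ))‖
        ≤ 2 * Real.exp R * (R * (1/N)) :=
      (my_exp_diff_le hnts1 hes).trans
        (mul_le_mul_of_nonneg_left hnts (by positivity))
    have hpow : ‖(t:ℂ)^d - (s:ℂ)^d‖ ≤ (d:ℝ)*(1/N) := by
      have e : (t:ℂ)^d - (s:ℂ)^d = ((t^d - s^d : ℝ) : ℂ) := by push_cast; ring
      rw [e, Complex.norm_real, Real.norm_eq_abs,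
        _root_.abs_of_nonneg (sub_nonneg.2 (pow_le_pow_left₀ hs0 hst' d))]
      calc t^d - s^d ≤ (d:ℝ)*(t-s) := my_pow_sub_pow_le hs0 hst' ht1 d
        _ ≤ (d:ℝ)*(1/N) := mul_le_mul_of_nonneg_left htsN (Nat.cast_nonneg d)
    have e1 : (t:ℂ)^d * Complex.exp (η*t) - (s:ℂ)^d * Complex.exp (η*(s:ℂ))
        = (t:ℂ)^d * (Complex.exp (η*(t:ℂ)) - Complex.exp (η*(s:ℂ)))
          + ((t:ℂ)^d - (s:ℂ)^d) * Complex.exp (η*(s:ℂ)) := by ring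
    rw [e1]
    calc ‖(t:ℂ)^d * (Complex.exp (η*(t:ℂ)) - Complex.exp (η*(s:ℂ)))
          + ((t:ℂ)^d - (s:ℂ)^d) * Complex.exp (η*(s:ℂ))‖
        ≤ ‖(t:ℂ)^d‖ * ‖Complex.exp (η*(t:ℂ)) - Complex.exp (η*(s:ℂ))‖
          + ‖(t:ℂ)^d - (s:ℂ)^d‖ * ‖Complex.exp (η*(s:ℂ))‖ := by
          refine (norm_add_le _ _).trans ?_
          rw [norm_mul, norm_mul]
      _ ≤ 1 * (2 * Real.exp R * (R * (1/N))) + ((d:ℝ)*(1/N)) * Real.exp R := by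
          exact add_le_add (mul_le_mul hnt hexp (norm_nonneg _) zero_le_one)
            (mul_le_mul hpow (my_norm_exp_le hes) (norm_nonneg _) (by positivity))
      _ = (2*R+(d:ℝ))*Real.exp R / N := by ring
  calc ‖(∫ t in s..b, (t : ℂ) ^ d * Complex.exp (η * t)) -
      ((n : ℂ) ^ d / (N : ℂ) ^ (d + 1)) * Complex.exp (η * (s:ℂ))‖
      = ‖∫ t in s..b, ((t : ℂ) ^ d * Complex.exp (η * t)
          - (s:ℂ)^d * Complex.exp (η*(s:ℂ)))‖ := by
        rw [intervalIntegral.integral_sub (hcont.intervalIntegrable s b)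
          intervalIntegrable_const, hconst]
    _ ≤ ((2*R+(d:ℝ))*Real.exp R / N) * |b - s| :=
        intervalIntegral.norm_integral_le_of_norm_le_const key
    _ = (2 * R + (d:ℝ)) * Real.exp R / (N : ℝ) ^ 2 := by
        rw [hbs1, _root_.abs_of_nonneg (by positivity : (0:ℝ) ≤ 1/(N:ℝ))]
        ring

private noncomputable def un (d : ℕ) (f : ℕ → ℝ) : ℕ → ℝ :=
  fun n => if n = 0 then f 0 + 1 else |f n / (n:ℝ)^d - 1|

private noncomputable def vn (d : ℕ) (f : ℕ → ℝ) : ℕ → ℝ :=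
  fun n => if n = 0 then f 0 + 1 else f n / (n:ℝ)^d

set_option maxHeartbeats 2000000 in
private lemma my_term (d : ℕ) (f : ℕ → ℝ) (hf : ∀ n, 0 < f n) (α : ℝ) {R : ℝ} (hR : 1 ≤ R)
    {η : ℂ} (hη : ‖η‖ ≤ R) {N : ℕ} (hN : 2*R ≤ (N:ℝ))
    (hNC1 : R^2 + |α| * (R+R^2) ≤ (N:ℝ)) {n : ℕ} (hn : n < N) :
    ‖(∫ t in ((n : ℝ)/N)..(((n : ℝ)+1)/N), (t : ℂ) ^ d * Complex.exp (η * t)) -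
      ((f n : ℂ) / (N : ℂ) ^ (d + 1)) * (1 + η / N) ^ ((n : ℂ) + α)‖
      ≤ (2*R+(d:ℝ))*Real.exp R/(N:ℝ)^2
        + (un d f n / N) * Real.exp R
        + (vn d f n / N) * (2 * (R^2 + |α| * (R+R^2)) * Real.exp R / N) := by
  have hN0 : (0:ℝ) < N := by linarith
  have hN1 : (1:ℝ) ≤ N := by linarith
  have hNC : (N:ℂ) ≠ 0 := by exact_mod_cast hN0.ne'
  have hn' : (n:ℝ) ≤ N := by exact_mod_cast hn.le
  have hn0 : (0:ℝ) ≤ n := Nat.cast_nonneg n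
  have hRN : R / N ≤ 1/2 := by rw [div_le_iff₀ hN0]; linarith
  set s : ℝ := (n:ℝ)/N with hsdef
  have hs0 : 0 ≤ s := div_nonneg hn0 hN0.le
  have hs1 : s ≤ 1 := by rw [hsdef, div_le_one hN0]; exact hn'
  set w : ℂ := η / (N:ℂ) with hwdef
  have hwn : ‖w‖ ≤ R / N := by
    rw [hwdef, norm_div, Complex.norm_natCast]
    exact div_le_div_of_nonneg_right hη hN0.le
  have hw12 : ‖w‖ ≤ 1/2 := hwn.trans hRN
  have hre : 0 < (1 + w).re := by
    rw [Complex.add_re, Complex.one_re]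
    have h1 : |w.re| ≤ ‖w‖ := Complex.abs_re_le_norm w
    have h2 : |w.re| ≤ 1/2 := h1.trans hw12
    linarith [(abs_le.1 h2).1]
  have hbase : (1 : ℂ) + w ≠ 0 := by
    intro h
    rw [h, Complex.zero_re] at hre
    exact lt_irrefl 0 hre
  set L : ℂ := Complex.log (1 + w) with hLdef
  have hLw : ‖L - w‖ ≤ (R/N)^2 := by
    refine (my_log_bound hw12).trans ?_
    exact pow_le_pow_left₀ (norm_nonneg w) hwn 2
  have hcpow : (1 + η / (N:ℂ)) ^ ((n : ℂ) + α) = Complex.exp (L * ((n:ℂ) + α)) := by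
    rw [← hwdef, Complex.cpow_def_of_ne_zero hbase, hLdef]
  have hes : ‖η * ((s:ℝ) : ℂ)‖ ≤ R := by
    rw [norm_mul, Complex.norm_real, Real.norm_eq_abs, _root_.abs_of_nonneg hs0]
    calc ‖η‖ * s ≤ R * 1 := mul_le_mul hη hs1 hs0 (by linarith)
      _ = R := by ring
  have hexpsR : ‖Complex.exp (η * ((s:ℝ) : ℂ))‖ ≤ Real.exp R := my_norm_exp_le hes
  -- piece 2 : mid vs midf
  have habs : |f n - (n:ℝ)^d| ≤ un d f n * (N:ℝ)^d := by
    rcases Nat.eq_zero_or_pos n with h0 | hpos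
    · subst h0
      have h1 : (0:ℝ) ≤ (0:ℝ)^d := by positivity
      have h2 : (0:ℝ)^d ≤ 1 := pow_le_one₀ le_rfl zero_le_one
      have h3 : (1:ℝ) ≤ (N:ℝ)^d := one_le_pow₀ hN1
      have h4 : |f 0 - ((0:ℕ):ℝ)^d| ≤ f 0 + 1 := by
        push_cast
        rw [abs_le]
        constructor <;> nlinarith [hf 0, h1, h2]
      calc |f 0 - ((0:ℕ):ℝ)^d| ≤ f 0 + 1 := h4
        _ = (f 0 + 1) * 1 := by ring
        _ ≤ (f 0 + 1) * (N:ℝ)^d := by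
            apply mul_le_mul_of_nonneg_left h3
            linarith [hf 0]
        _ = un d f 0 * (N:ℝ)^d := by simp [un]
    · have hnd : (0:ℝ) < (n:ℝ)^d := by positivity
      have e : f n - (n:ℝ)^d = (f n/(n:ℝ)^d - 1) * (n:ℝ)^d := by field_simp
      rw [e, abs_mul, _root_.abs_of_pos hnd]
      have h5 : (n:ℝ)^d ≤ (N:ℝ)^d := pow_le_pow_left₀ hn0 hn' d
      have h6 : un d f n = |f n/(n:ℝ)^d - 1| := by
        simp [un, Nat.pos_iff_ne_zero.1 hpos]
      rw [h6]
      exact mul_le_mul_of_nonneg_left h5 (abs_nonneg _)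
  have hpiece2 : ‖((n:ℂ)^d / (N:ℂ)^(d+1)) * Complex.exp (η * ((s:ℝ):ℂ))
      - ((f n : ℂ) / (N : ℂ) ^ (d + 1)) * Complex.exp (η * ((s:ℝ):ℂ))‖
      ≤ (un d f n / N) * Real.exp R := by
    have e : ((n:ℂ)^d / (N:ℂ)^(d+1)) * Complex.exp (η * ((s:ℝ):ℂ))
        - ((f n : ℂ) / (N : ℂ) ^ (d + 1)) * Complex.exp (η * ((s:ℝ):ℂ))
        = ((((n:ℝ)^d - f n : ℝ)) : ℂ) / (N:ℂ)^(d+1) * Complex.exp (η * ((s:ℝ):ℂ)) := by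
      push_cast
      ring
    rw [e, norm_mul, norm_div, Complex.norm_real, Real.norm_eq_abs]
    have h7 : ‖(N:ℂ)^(d+1)‖ = (N:ℝ)^(d+1) := by
      rw [norm_pow, Complex.norm_natCast]
    rw [h7]
    have h8 : |(n:ℝ)^d - f n| / (N:ℝ)^(d+1) ≤ un d f n / N := by
      rw [abs_sub_comm, div_le_div_iff₀ (by positivity) hN0]
      calc |f n - (n:ℝ)^d| * N ≤ (un d f n * (N:ℝ)^d) * N :=
            mul_le_mul_of_nonneg_right habs hN0.le
        _ = un d f n * (N:ℝ)^(d+1) := by ring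
    have hun0 : 0 ≤ un d f n / N := by
      apply div_nonneg _ hN0.le
      rcases Nat.eq_zero_or_pos n with h0 | hpos
      · simp [un, h0]; linarith [hf 0]
      · simp [un, Nat.pos_iff_ne_zero.1 hpos]
    exact mul_le_mul h8 hexpsR (norm_nonneg _) (by positivity)
  -- piece 3 : midf vs term
  have hLnw : ‖L * ((n:ℂ) + α) - η * ((s:ℝ):ℂ)‖ ≤ (R^2 + |α| * (R+R^2)) / N := by
    have e : L * ((n:ℂ) + α) - η * ((s:ℝ):ℂ) = (n:ℂ) * (L - w) + (α:ℂ) * L := by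
      rw [hwdef, hsdef]
      push_cast
      field_simp
      ring
    rw [e]
    have hLnorm : ‖L‖ ≤ R/N + (R/N)^2 := by
      calc ‖L‖ = ‖w + (L - w)‖ := by ring_nf
        _ ≤ ‖w‖ + ‖L - w‖ := norm_add_le _ _
        _ ≤ R/N + (R/N)^2 := add_le_add hwn hLw
    have hNN : (N:ℝ) ≤ (N:ℝ)^2 := by nlinarith
    have hsq : (R/N)^2 ≤ R^2/N := by
      rw [div_pow, div_le_div_iff₀ (by positivity) hN0]
      nlinarith [mul_le_mul_of_nonneg_left hNN (sq_nonneg R)]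
    calc ‖(n:ℂ) * (L - w) + (α:ℂ) * L‖ ≤ ‖(n:ℂ) * (L - w)‖ + ‖(α:ℂ) * L‖ := norm_add_le _ _
      _ = (n:ℝ) * ‖L - w‖ + |α| * ‖L‖ := by
          rw [norm_mul, norm_mul, Complex.norm_natCast, Complex.norm_real, Real.norm_eq_abs]
      _ ≤ (N:ℝ) * (R/N)^2 + |α| * (R/N + R^2/N) := by
          apply add_le_add
          · exact mul_le_mul hn' hLw (norm_nonneg _) hN0.le
          · apply mul_le_mul_of_nonneg_left _ (abs_nonneg α)
            exact hLnorm.trans (add_le_add le_rfl hsq)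
      _ = (N:ℝ) * (R^2/(N:ℝ)^2) + |α| * (R/N + R^2/N) := by rw [div_pow]
      _ = R^2/N + |α| * (R+R^2) / N := by field_simp
      _ = (R^2 + |α| * (R+R^2)) / N := by ring
  have hLnw1 : ‖L * ((n:ℂ) + α) - η * ((s:ℝ):ℂ)‖ ≤ 1 := by
    refine hLnw.trans ?_
    rw [div_le_one hN0]
    exact hNC1
  have hexpdiff : ‖Complex.exp (L * ((n:ℂ) + α)) - Complex.exp (η * ((s:ℝ):ℂ))‖
      ≤ 2 * Real.exp R * ((R^2 + |α| * (R+R^2)) / N) :=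
    (my_exp_diff_le hLnw1 hes).trans (mul_le_mul_of_nonneg_left hLnw (by positivity))
  have hcoef : ‖(f n : ℂ) / (N : ℂ) ^ (d + 1)‖ ≤ vn d f n / N := by
    rw [norm_div, Complex.norm_real, Real.norm_eq_abs, _root_.abs_of_pos (hf n)]
    rw [norm_pow, Complex.norm_natCast]
    rcases Nat.eq_zero_or_pos n with h0 | hpos
    · subst h0
      have h9 : (N:ℝ) ≤ (N:ℝ)^(d+1) := le_self_pow₀ hN1 (Nat.succ_ne_zero d)
      rw [div_le_div_iff₀ (by positivity) hN0]
      have : vn d f 0 = f 0 + 1 := by simp [vn]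
      rw [this]
      nlinarith [hf 0, hN0]
    · have hnd : (0:ℝ) < (n:ℝ)^d := by positivity
      have e : f n / (N:ℝ)^(d+1) = (f n/(n:ℝ)^d) * ((n:ℝ)^d/(N:ℝ)^(d+1)) := by
        field_simp
      have h10 : vn d f n = f n/(n:ℝ)^d := by simp [vn, Nat.pos_iff_ne_zero.1 hpos]
      rw [e, h10]
      have h11 : (n:ℝ)^d/(N:ℝ)^(d+1) ≤ 1/N := by
        rw [div_le_div_iff₀ (by positivity) hN0, pow_succ]
        have h5 : (n:ℝ)^d ≤ (N:ℝ)^d := pow_le_pow_left₀ hn0 hn' d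
        nlinarith [pow_pos hN0 d]
      calc (f n/(n:ℝ)^d) * ((n:ℝ)^d/(N:ℝ)^(d+1)) ≤ (f n/(n:ℝ)^d) * (1/N) := by
            apply mul_le_mul_of_nonneg_left h11 (div_nonneg (hf n).le (by positivity))
        _ = (f n/(n:ℝ)^d) / N := by ring
  have hpiece3 : ‖((f n : ℂ) / (N : ℂ) ^ (d + 1)) * Complex.exp (η * ((s:ℝ):ℂ))
      - ((f n : ℂ) / (N : ℂ) ^ (d + 1)) * Complex.exp (L * ((n:ℂ) + α))‖
      ≤ (vn d f n / N) * (2 * (R^2 + |α| * (R+R^2)) * Real.exp R / N) := by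
    have e : ((f n : ℂ) / (N : ℂ) ^ (d + 1)) * Complex.exp (η * ((s:ℝ):ℂ))
        - ((f n : ℂ) / (N : ℂ) ^ (d + 1)) * Complex.exp (L * ((n:ℂ) + α))
        = ((f n : ℂ) / (N : ℂ) ^ (d + 1)) *
          (Complex.exp (η * ((s:ℝ):ℂ)) - Complex.exp (L * ((n:ℂ) + α))) := by ring
    rw [e, norm_mul]
    have h12 : ‖Complex.exp (η * ((s:ℝ):ℂ)) - Complex.exp (L * ((n:ℂ) + α))‖
        ≤ 2 * Real.exp R * ((R^2 + |α| * (R+R^2)) / N) := by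
      rw [norm_sub_rev]
      exact hexpdiff
    calc ‖(f n : ℂ) / (N : ℂ) ^ (d + 1)‖ *
          ‖Complex.exp (η * ((s:ℝ):ℂ)) - Complex.exp (L * ((n:ℂ) + α))‖
        ≤ (vn d f n / N) * (2 * Real.exp R * ((R^2 + |α| * (R+R^2)) / N)) := by
          apply mul_le_mul hcoef h12 (norm_nonneg _) ?_
          refine div_nonneg ?_ hN0.le
          rcases Nat.eq_zero_or_pos n with h0 | hpos
          · simp [vn, h0]; linarith [hf 0]
          · have h10 : vn d f n = f n/(n:ℝ)^d := by simp [vn, Nat.pos_iff_ne_zero.1 hpos]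
            rw [h10]; exact div_nonneg (hf n).le (by positivity)
      _ = (vn d f n / N) * (2 * (R^2 + |α| * (R+R^2)) * Real.exp R / N) := by ring
  -- combine
  have hdecomp : (∫ t in ((n : ℝ)/N)..(((n : ℝ)+1)/N), (t : ℂ) ^ d * Complex.exp (η * t)) -
      ((f n : ℂ) / (N : ℂ) ^ (d + 1)) * (1 + η / N) ^ ((n : ℂ) + α)
      = ((∫ t in ((n : ℝ)/N)..(((n : ℝ)+1)/N), (t : ℂ) ^ d * Complex.exp (η * t)) -
          ((n:ℂ)^d / (N:ℂ)^(d+1)) * Complex.exp (η * ((s:ℝ):ℂ)))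
        + (((n:ℂ)^d / (N:ℂ)^(d+1)) * Complex.exp (η * ((s:ℝ):ℂ))
          - ((f n : ℂ) / (N : ℂ) ^ (d + 1)) * Complex.exp (η * ((s:ℝ):ℂ)))
        + (((f n : ℂ) / (N : ℂ) ^ (d + 1)) * Complex.exp (η * ((s:ℝ):ℂ))
          - ((f n : ℂ) / (N : ℂ) ^ (d + 1)) * Complex.exp (L * ((n:ℂ) + α))) := by
    rw [hcpow]
    ring
  rw [hdecomp]
  refine (norm_add₃_le).trans ?_
  refine add_le_add (add_le_add ?_ hpiece2) hpiece3
  exact my_chunk d hR hη hN hn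
theorem sum_tendsto_uniformly (d : ℕ) (f : ℕ → ℝ) (hf : ∀ n, 0 < f n)
    (hlim : Tendsto (fun n => f n / (n : ℝ) ^ d) atTop (nhds 1))
    (α : ℝ) (K : Set ℂ) (hK : IsCompact K) :
    TendstoUniformlyOn
      (fun N η => ∑ n ∈ Finset.range N,
        ((f n : ℂ) / (N : ℂ) ^ (d + 1)) * (1 + η / N) ^ ((n : ℂ) + α))
      (fun η => ∫ t in (0 : ℝ)..1, (t : ℂ) ^ d * Complex.exp (η * t))
      atTop K := by
  obtain ⟨C, hC⟩ := hK.exists_bound_of_continuousOn continuousOn_id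
  set R : ℝ := max C 1 with hRdef
  have hR : (1:ℝ) ≤ R := le_max_right _ _
  have hηR : ∀ η ∈ K, ‖η‖ ≤ R := fun η hη => le_trans (hC η hη) (le_max_left _ _)
  -- limits of un/vn and their Cesàro means
  have hu0 : Tendsto (un d f) atTop (nhds 0) := by
    have h1 : Tendsto (fun n => |f n / (n:ℝ)^d - 1|) atTop (nhds 0) := by
      have := (hlim.sub (tendsto_const_nhds (x := (1:ℝ)))).abs
      simpa using this
    refine Tendsto.congr' ?_ h1
    filter_upwards [eventually_ge_atTop 1] with n hn
    simp [un, Nat.one_le_iff_ne_zero.1 hn]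
  have hv1 : Tendsto (vn d f) atTop (nhds 1) := by
    refine Tendsto.congr' ?_ hlim
    filter_upwards [eventually_ge_atTop 1] with n hn
    simp [vn, Nat.one_le_iff_ne_zero.1 hn]
  have hU : Tendsto (fun N : ℕ => ((N:ℝ))⁻¹ * ∑ n ∈ range N, un d f n) atTop (nhds 0) :=
    hu0.cesaro
  have hV : Tendsto (fun N : ℕ => ((N:ℝ))⁻¹ * ∑ n ∈ range N, vn d f n) atTop (nhds 1) :=
    hv1.cesaro
  set E : ℕ → ℝ := fun N => (2*R+(d:ℝ))*Real.exp R/(N:ℝ)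
      + Real.exp R * (((N:ℝ))⁻¹ * ∑ n ∈ range N, un d f n)
      + (2 * (R^2 + |α| * (R+R^2)) * Real.exp R/(N:ℝ))
          * (((N:ℝ))⁻¹ * ∑ n ∈ range N, vn d f n) with hEdef
  have hE : Tendsto E atTop (nhds 0) := by
    have t1 : Tendsto (fun N:ℕ => (2*R+(d:ℝ))*Real.exp R/(N:ℝ)) atTop (nhds 0) :=
      tendsto_const_div_atTop_nhds_zero_nat _
    have t2 : Tendsto (fun N:ℕ => Real.exp R * (((N:ℝ))⁻¹ * ∑ n ∈ range N, un d f n))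
        atTop (nhds 0) := by
      simpa using hU.const_mul (Real.exp R)
    have t3 : Tendsto (fun N:ℕ => (2 * (R^2 + |α| * (R+R^2)) * Real.exp R/(N:ℝ))
        * (((N:ℝ))⁻¹ * ∑ n ∈ range N, vn d f n)) atTop (nhds 0) := by
      simpa using (tendsto_const_div_atTop_nhds_zero_nat
        (2 * (R^2 + |α| * (R+R^2)) * Real.exp R)).mul hV
    simpa using (t1.add t2).add t3
  rw [Metric.tendstoUniformlyOn_iff]
  intro ε hε
  have hEε : ∀ᶠ N : ℕ in atTop, E N < ε := hE.eventually_lt_const hε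
  have h2R : ∀ᶠ N : ℕ in atTop, 2*R ≤ (N:ℝ) :=
    (tendsto_natCast_atTop_atTop (R := ℝ)).eventually_ge_atTop (2*R)
  have hC1N : ∀ᶠ N : ℕ in atTop, R^2 + |α| * (R+R^2) ≤ (N:ℝ) :=
    (tendsto_natCast_atTop_atTop (R := ℝ)).eventually_ge_atTop _
  filter_upwards [hEε, h2R, hC1N] with N hN1 hN2 hN3
  intro η hη
  have hN0 : (0:ℝ) < N := by linarith
  simp only [dist_eq_norm]
  refine lt_of_le_of_lt ?_ hN1
  have hcont : Continuous fun t : ℝ => (t:ℂ)^d * Complex.exp (η * t) :=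
    (Complex.continuous_ofReal.pow d).mul
      (continuous_const.mul Complex.continuous_ofReal).cexp
  have hsplit : (∫ t in (0:ℝ)..1, (t:ℂ)^d * Complex.exp (η * t))
      = ∑ n ∈ range N, ∫ t in ((n:ℝ)/N)..(((n:ℝ)+1)/N), (t:ℂ)^d * Complex.exp (η * t) := by
    have h := intervalIntegral.sum_integral_adjacent_intervals
      (a := fun k : ℕ => (k:ℝ)/N) (n := N)
      (f := fun t : ℝ => (t:ℂ)^d * Complex.exp (η * t)) (μ := MeasureTheory.volume)
      (fun k _ => hcont.intervalIntegrable _ _)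
    simp only [Nat.cast_zero, zero_div, div_self hN0.ne'] at h
    rw [← h]
    refine Finset.sum_congr rfl fun k _ => ?_
    have e : ((k+1 : ℕ):ℝ) = (k:ℝ)+1 := by push_cast; ring
    rw [e]
  rw [hsplit, ← Finset.sum_sub_distrib]
  refine (norm_sum_le _ _).trans ?_
  have hterm : ∀ n ∈ range N,
      ‖(∫ t in ((n:ℝ)/N)..(((n:ℝ)+1)/N), (t:ℂ)^d * Complex.exp (η * t)) -
        ((f n : ℂ) / (N : ℂ) ^ (d + 1)) * (1 + η / N) ^ ((n : ℂ) + α)‖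
      ≤ (2*R+(d:ℝ))*Real.exp R/(N:ℝ)^2
        + (un d f n / N) * Real.exp R
        + (vn d f n / N) * (2 * (R^2 + |α| * (R+R^2)) * Real.exp R / N) :=
    fun n hn => my_term d f hf α hR (hηR η hη) hN2 hN3 (mem_range.1 hn)
  refine (Finset.sum_le_sum hterm).trans ?_
  apply le_of_eq
  rw [Finset.sum_add_distrib, Finset.sum_add_distrib, Finset.sum_const, Finset.card_range,
    nsmul_eq_mul]
  simp only [div_mul_eq_mul_div, ← Finset.sum_div, ← Finset.sum_mul]
  rw [hEdef]
  field_simp
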